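/- Let n ≥ 1. Let u, v : Fin (n+2) → ℝ be linearly independent such that P = span{u,v} contains exactly one null direction (there is a nonzero null vector in P and any two nonzero null vectors in P are parallel), and similarly let u', v' be linearly independent with P' = span{u',v'} containing exactly one null direction; assume P ≠ P'. Set B = u∧v and B' = u'∧v'. Then P ∩ P' contains a nonzero null vector (the two null 2-planes intersect along a null line) if and only if both: the full antisymmetrization over all four indices of (i,j,k,l) ↦ B i j * B' k l vanishes for all i,j,k,l, and B·B' = Σ_{i,j} ε i * ε j * B i j * B' i j = 0. -/

import Mathlib

open Finset

/-- The Minkowski signature factor: `ε 0 = 1`, `ε i = −1` for `i ≠ 0`. -/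
noncomputable def eps {n : ℕ} (i : Fin (n + 2)) : ℝ := if i = 0 then 1 else -1

/-- The Minkowski bilinear form `⟨x,y⟩ = x 0 * y 0 − Σ_{a=1}^{n+1} x a * y a` on ℝ^{n+2}. -/
noncomputable def mink {n : ℕ} (x y : Fin (n + 2) → ℝ) : ℝ :=
  ∑ i, eps i * x i * y i

/-- The simple bivector `(u∧v) i j = u i * v j − v i * u j`. -/
noncomputable def wedge {m : ℕ} (u v : Fin m → ℝ) : Fin m → Fin m → ℝ :=
  fun i j => u i * v j - v i * u j

/-- The η-contraction `B·B' = Σ_{i,j} ε i * ε j * B i j * B' i j`. -/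
noncomputable def contr {n : ℕ} (B B' : Fin (n + 2) → Fin (n + 2) → ℝ) : ℝ :=
  ∑ i, ∑ j, eps i * eps j * B i j * B' i j

/-- Full antisymmetrization of a 4-index expression over all four index slots. -/
noncomputable def alt4 {m : ℕ} (T : Fin m → Fin m → Fin m → Fin m → ℝ)
    (i j k l : Fin m) : ℝ :=
  (1 / 24 : ℝ) * ∑ σ : Equiv.Perm (Fin 4),
    ((Equiv.Perm.sign σ : ℤ) : ℝ) *
      T (![i, j, k, l] (σ 0)) (![i, j, k, l] (σ 1)) (![i, j, k, l] (σ 2)) (![i, j, k, l] (σ 3))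

section Aux

variable {n m : ℕ}

/-! ### Bilinearity and symmetry of `mink` -/

lemma mink_comm (x y : Fin (n+2) → ℝ) : mink x y = mink y x := by
  unfold mink; exact Finset.sum_congr rfl fun i _ => by ring

lemma mink_comb_left (a b : ℝ) (x y z : Fin (n+2) → ℝ) :
    mink (a • x + b • y) z = a * mink x z + b * mink y z := by
  unfold mink
  rw [Finset.mul_sum, Finset.mul_sum, ← Finset.sum_add_distrib]
  exact Finset.sum_congr rfl fun i _ => by simp [Pi.add_apply]; ring

lemma mink_smul_left (a : ℝ) (x z : Fin (n+2) → ℝ) : mink (a • x) z = a * mink x z := by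
  have := mink_comb_left a 0 x x z; simpa using this

lemma mink_comb_right (a b : ℝ) (x y z : Fin (n+2) → ℝ) :
    mink z (a • x + b • y) = a * mink z x + b * mink z y := by
  rw [mink_comm, mink_comb_left, mink_comm x z, mink_comm y z]

lemma mink_comb_both (a b : ℝ) (x y : Fin (n+2) → ℝ) :
    mink (a • x + b • y) (a • x + b • y) =
      a * a * mink x x + 2 * (a * b) * mink x y + b * b * mink y y := by
  rw [mink_comb_left, mink_comb_right, mink_comb_right, mink_comm y x]; ring

/-! ### Null vectors -/

lemma mink_self_eq (x : Fin (n+2) → ℝ) :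
    mink x x = x 0 * x 0 - ∑ i ∈ univ.erase 0, x i * x i := by
  unfold mink
  rw [← Finset.add_sum_erase _ _ (Finset.mem_univ 0)]
  unfold eps
  simp only [if_pos rfl, one_mul]
  have h2 : ∑ i ∈ univ.erase (0:Fin (n+2)), (if i = 0 then (1:ℝ) else -1) * x i * x i
      = ∑ i ∈ univ.erase (0:Fin (n+2)), -(x i * x i) := by
    refine Finset.sum_congr rfl fun i hi => ?_
    rw [if_neg (Finset.ne_of_mem_erase hi)]; ring
  rw [h2, Finset.sum_neg_distrib]
  norm_num
  ring

lemma null_eq_zero (x : Fin (n+2) → ℝ) (hx : mink x x = 0) (h0 : x 0 = 0) : x = 0 := by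
  have h := mink_self_eq x
  rw [hx, h0] at h
  have hsum : ∑ i ∈ univ.erase 0, x i * x i = 0 := by linarith
  have hall : ∀ i ∈ univ.erase (0 : Fin (n+2)), x i * x i = 0 := by
    intro i hi
    exact (Finset.sum_eq_zero_iff_of_nonneg (fun j _ => mul_self_nonneg (x j))).1 hsum i hi
  funext i
  by_cases hi : i = 0
  · simpa [hi] using h0
  · have := hall i (Finset.mem_erase.2 ⟨hi, Finset.mem_univ i⟩)
    have := mul_self_eq_zero.1 this
    simpa using this

lemma time_ne_zero (x : Fin (n+2) → ℝ) (hx : mink x x = 0) (hx0 : x ≠ 0) : x 0 ≠ 0 :=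
  fun h => hx0 (null_eq_zero x hx h)

lemma null_parallel (x y : Fin (n+2) → ℝ) (hx : mink x x = 0) (hy : mink y y = 0)
    (hxy : mink x y = 0) (hx0 : x ≠ 0) : ∃ c : ℝ, y = c • x := by
  have ht := time_ne_zero x hx hx0
  set z : Fin (n+2) → ℝ := (y 0) • x + (-(x 0)) • y with hz
  have hzz : mink z z = 0 := by
    rw [hz, mink_comb_both, hx, hy, hxy]; ring
  have hz0 : z 0 = 0 := by simp [hz]; ring
  have hzeq : z = 0 := null_eq_zero z hzz hz0
  refine ⟨y 0 / x 0, ?_⟩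
  funext i
  have : y 0 * x i - x 0 * y i = 0 := by
    have := congrFun hzeq i; simpa [hz, sub_eq_add_neg] using this
  have : y i = (y 0 / x 0) * x i := by field_simp; linarith
  simpa using this

/-! ### The null direction is in the radical of the plane -/

lemma radical (P : Submodule ℝ (Fin (n+2) → ℝ))
    (huniq : ∀ w₁ ∈ P, ∀ w₂ ∈ P, w₁ ≠ 0 → w₂ ≠ 0 → mink w₁ w₁ = 0 → mink w₂ w₂ = 0 →
      ∃ c : ℝ, w₂ = c • w₁)
    (w : Fin (n+2) → ℝ) (hwP : w ∈ P) (hw0 : w ≠ 0) (hww : mink w w = 0)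
    (z : Fin (n+2) → ℝ) (hzP : z ∈ P) : mink w z = 0 := by
  by_contra hm
  by_cases hzz : mink z z = 0
  · have hz0 : z ≠ 0 := by
      rintro rfl
      apply hm
      have : mink w (0 : Fin (n+2) → ℝ) = mink ((0:ℝ) • w) w := by
        rw [mink_comm]; congr 1; simp
      rw [this, mink_smul_left]; ring
    obtain ⟨c, hc⟩ := huniq w hwP z hzP hw0 hz0 hww hzz
    apply hm
    rw [hc, mink_comm, mink_smul_left, hww]; ring
  · set t : ℝ := -(2 * mink w z) / mink z z with htdef
    have ht : t ≠ 0 := by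
      simp only [htdef, div_ne_zero_iff, neg_ne_zero]
      exact ⟨by intro h; apply hm; linarith, hzz⟩
    set w' : Fin (n+2) → ℝ := (1:ℝ) • w + t • z with hw'
    have hw'w' : mink w' w' = 0 := by
      rw [hw', mink_comb_both, hww, htdef]
      field_simp
      ring
    have hw'0 : w' ≠ 0 := by
      intro h
      have hwz : w = (-t) • z := by
        funext i
        have := congrFun h i
        simp [hw'] at this ⊢
        linarith
      have hval : mink w w = (-t) * ((-t) * mink z z) := by
        conv_lhs => rw [hwz]
        rw [mink_smul_left, mink_comm, mink_smul_left]
      rw [hww] at hval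
      have : mink z z = 0 := by
        have htt : (-t) * (-t) ≠ 0 := mul_ne_zero (neg_ne_zero.2 ht) (neg_ne_zero.2 ht)
        have : (-t) * (-t) * mink z z = 0 := by linarith [hval]
        exact (mul_eq_zero.1 this).resolve_left htt
      exact hzz this
    have hw'P : w' ∈ P := P.add_mem (P.smul_mem _ hwP) (P.smul_mem _ hzP)
    obtain ⟨c, hc⟩ := huniq w hwP w' hw'P hw0 hw'0 hww hw'w'
    have hzw : z = ((c - 1) / t) • w := by
      funext i
      have := congrFun hc i
      simp [hw'] at this
      simp only [Pi.smul_apply, smul_eq_mul]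
      field_simp
      linarith
    apply hm
    rw [mink_comm, hzw, mink_smul_left, hww]; ring

/-! ### Contraction formulas -/

lemma contr_wedge (x y z t : Fin (n+2) → ℝ) :
    contr (wedge x y) (wedge z t) = 2 * (mink x z * mink y t - mink x t * mink y z) := by
  have h : contr (wedge x y) (wedge z t) =
      ∑ i, ∑ j, ((eps i * x i * z i) * (eps j * y j * t j)
        - (eps i * x i * t i) * (eps j * y j * z j)
        - (eps i * y i * z i) * (eps j * x j * t j)
        + (eps i * y i * t i) * (eps j * x j * z j)) := by
    unfold contr wedge
    refine Finset.sum_congr rfl fun i _ => Finset.sum_congr rfl fun j _ => ?_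
    have : eps i * eps i = 1 := by unfold eps; split <;> norm_num
    ring
  rw [h]
  simp only [Finset.sum_add_distrib, Finset.sum_sub_distrib, ← Finset.sum_mul_sum]
  unfold mink
  ring

lemma contr_smul_eq (e e' : ℝ) (X Y X' Y' : Fin (n+2) → Fin (n+2) → ℝ)
    (hX : ∀ i j, X' i j = e * X i j) (hY : ∀ i j, Y' i j = e' * Y i j) :
    contr X' Y' = (e * e') * contr X Y := by
  unfold contr
  rw [Finset.mul_sum]
  refine Finset.sum_congr rfl fun i _ => ?_
  rw [Finset.mul_sum]
  refine Finset.sum_congr rfl fun j _ => ?_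
  rw [hX, hY]; ring

/-! ### Wedge combination / degeneracy -/

lemma wedge_comb (α β a b : ℝ) (u v x y : Fin m → ℝ)
    (hx : α • u + β • v = x) (hy : a • u + b • v = y) :
    ∀ i j, wedge x y i j = (α * b - β * a) * wedge u v i j := by
  intro i j
  rw [← hx, ← hy]
  simp [wedge]
  ring

lemma wedge_zero_dep (x y : Fin m → ℝ) (hx : x ≠ 0) (h : ∀ i j, wedge x y i j = 0) :
    ∃ c : ℝ, y = c • x := by
  have : ∃ i0, x i0 ≠ 0 := by
    by_contra hc
    push_neg at hc
    exact hx (funext fun i => hc i)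
  obtain ⟨i0, hi0⟩ := this
  refine ⟨y i0 / x i0, ?_⟩
  funext j
  have := h i0 j
  unfold wedge at this
  have : y j = (y i0 / x i0) * x j := by field_simp; linarith
  simpa using this

/-! ### Determinant machinery -/

lemma perm_sum_eq_det (R : Fin 4 → Fin m → ℝ) (x : Fin 4 → Fin m) :
    ∑ σ : Equiv.Perm (Fin 4), ((Equiv.Perm.sign σ : ℤ) : ℝ) * ∏ b, R b (x (σ b))
      = (Matrix.of fun a b => R a (x b)).det := by
  rw [Matrix.det_apply']
  refine Fintype.sum_equiv (Equiv.inv (Equiv.Perm (Fin 4))) _ _ (fun σ => ?_)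
  simp only [Equiv.inv_apply]
  rw [Equiv.Perm.sign_inv]
  congr 1
  rw [← Equiv.prod_comp σ (fun i => (Matrix.of fun a b => R a (x b)) (σ⁻¹ i) i)]
  refine Finset.prod_congr rfl fun b _ => ?_
  simp [Matrix.of_apply]

lemma alt4_wedge_eq_det (u v u' v' : Fin m → ℝ) (i j k l : Fin m) :
    alt4 (fun i j k l => wedge u v i j * wedge u' v' k l) i j k l
      = (1/6 : ℝ) * (Matrix.of fun a b => ![u, v, u', v'] a (![i, j, k, l] b)).det := by
  unfold alt4 wedge
  set x : Fin 4 → Fin m := ![i, j, k, l] with hx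
  have expand : ∀ σ : Equiv.Perm (Fin 4),
      (u (x (σ 0)) * v (x (σ 1)) - v (x (σ 0)) * u (x (σ 1))) *
        (u' (x (σ 2)) * v' (x (σ 3)) - v' (x (σ 2)) * u' (x (σ 3)))
      = (∏ b, ![u, v, u', v'] b (x (σ b))) - (∏ b, ![v, u, u', v'] b (x (σ b)))
        - (∏ b, ![u, v, v', u'] b (x (σ b))) + (∏ b, ![v, u, v', u'] b (x (σ b))) := by
    intro σ
    simp [Fin.prod_univ_four]
    ring
  have key : ∀ (R : Fin 4 → Fin m → ℝ) (τ : Equiv.Perm (Fin 4)),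
      ∑ σ : Equiv.Perm (Fin 4), ((Equiv.Perm.sign σ : ℤ) : ℝ) * ∏ b, (R ∘ τ) b (x (σ b))
        = ((Equiv.Perm.sign τ : ℤ) : ℝ) * (Matrix.of fun a b => R a (x b)).det := by
    intro R τ
    rw [perm_sum_eq_det]
    have : (Matrix.of fun a b => (R ∘ τ) a (x b)) = (Matrix.of fun a b => R a (x b)).submatrix τ id := by
      ext a b; simp [Matrix.submatrix_apply]
    rw [this, Matrix.det_permute]
  set R0 : Fin 4 → Fin m → ℝ := ![u, v, u', v'] with hR0
  have hB : ![v, u, u', v'] = R0 ∘ (Equiv.swap 0 1) := by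
    funext b; fin_cases b <;> simp [hR0, Equiv.swap_apply_def]
  have hC : ![u, v, v', u'] = R0 ∘ (Equiv.swap 2 3) := by
    funext b; fin_cases b <;> simp [hR0, Equiv.swap_apply_def]
  have hD : ![v, u, v', u'] = R0 ∘ (((Equiv.swap 0 1) * (Equiv.swap 2 3) : Equiv.Perm (Fin 4))) := by
    funext b; fin_cases b <;> simp [hR0, Equiv.Perm.mul_apply, Equiv.swap_apply_def]
  have hsplit : ∑ σ : Equiv.Perm (Fin 4), ((Equiv.Perm.sign σ : ℤ) : ℝ) *
      ((u (x (σ 0)) * v (x (σ 1)) - v (x (σ 0)) * u (x (σ 1))) *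
        (u' (x (σ 2)) * v' (x (σ 3)) - v' (x (σ 2)) * u' (x (σ 3))))
      = (∑ σ : Equiv.Perm (Fin 4), ((Equiv.Perm.sign σ : ℤ) : ℝ) * ∏ b, ![u,v,u',v'] b (x (σ b)))
        - (∑ σ : Equiv.Perm (Fin 4), ((Equiv.Perm.sign σ : ℤ) : ℝ) * ∏ b, ![v,u,u',v'] b (x (σ b)))
        - (∑ σ : Equiv.Perm (Fin 4), ((Equiv.Perm.sign σ : ℤ) : ℝ) * ∏ b, ![u,v,v',u'] b (x (σ b)))
        + (∑ σ : Equiv.Perm (Fin 4), ((Equiv.Perm.sign σ : ℤ) : ℝ) * ∏ b, ![v,u,v',u'] b (x (σ b))) := by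
    rw [← Finset.sum_sub_distrib, ← Finset.sum_sub_distrib, ← Finset.sum_add_distrib]
    refine Finset.sum_congr rfl fun σ _ => ?_
    rw [expand σ]; ring
  have hAd : ∑ σ : Equiv.Perm (Fin 4), ((Equiv.Perm.sign σ : ℤ) : ℝ) * ∏ b, ![u,v,u',v'] b (x (σ b))
      = (Matrix.of fun a b => R0 a (x b)).det := perm_sum_eq_det R0 x
  have hBd := key R0 (Equiv.swap 0 1)
  have hCd := key R0 (Equiv.swap 2 3)
  have hDd := key R0 (((Equiv.swap 0 1) * (Equiv.swap 2 3) : Equiv.Perm (Fin 4)))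
  rw [← hB] at hBd
  rw [← hC] at hCd
  rw [← hD] at hDd
  have hsB : ((Equiv.Perm.sign (Equiv.swap (0:Fin 4) 1) : ℤ) : ℝ) = -1 := by
    rw [Equiv.Perm.sign_swap (by decide)]; norm_num
  have hsC : ((Equiv.Perm.sign (Equiv.swap (2:Fin 4) 3) : ℤ) : ℝ) = -1 := by
    rw [Equiv.Perm.sign_swap (by decide)]; norm_num
  have hsD : ((Equiv.Perm.sign (((Equiv.swap 0 1) * (Equiv.swap 2 3) : Equiv.Perm (Fin 4))) : ℤ) : ℝ) = 1 := by
    rw [map_mul, Equiv.Perm.sign_swap (by decide), Equiv.Perm.sign_swap (by decide)]; norm_num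
  rw [hsB] at hBd; rw [hsC] at hCd; rw [hsD] at hDd
  rw [hsplit, hAd, hBd, hCd, hDd]
  ring

lemma minors_zero_iff (W : Fin 4 → Fin m → ℝ) :
    (∀ f : Fin 4 → Fin m, (Matrix.of fun a b => W a (f b)).det = 0) ↔
      ¬ LinearIndependent ℝ W := by
  constructor
  · intro h hW
    set G : Matrix (Fin 4) (Fin 4) ℝ := Matrix.of fun a b => ∑ i, W a i * W b i with hG
    have hdet : G.det ≠ 0 := by
      rw [Ne, ← Matrix.exists_mulVec_eq_zero_iff]
      rintro ⟨c, hc0, hc⟩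
      have hs : ∀ i, ∑ a, c a * W a i = 0 := by
        have h1 : ∑ i, (∑ a, c a * W a i) ^ 2 = 0 := by
          have h2 : ∑ a, c a * (G.mulVec c) a = 0 := by
            rw [funext_iff] at hc
            simp only [Pi.zero_apply] at hc
            exact Finset.sum_eq_zero fun a _ => by rw [hc a]; ring
          rw [← h2]
          have h3 : ∀ a, c a * (G.mulVec c) a = ∑ b, ∑ i, c a * c b * (W a i * W b i) := by
            intro a
            simp only [Matrix.mulVec, dotProduct, hG, Matrix.of_apply,
              Finset.mul_sum, Finset.sum_mul]
            refine Finset.sum_congr rfl fun b _ => Finset.sum_congr rfl fun i _ => by ring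
          rw [Finset.sum_congr rfl fun a _ => h3 a]
          rw [Finset.sum_comm]
          rw [Finset.sum_congr rfl fun b _ => Finset.sum_comm]
          rw [Finset.sum_comm]
          refine Finset.sum_congr rfl fun i _ => ?_
          rw [sq, Finset.sum_mul_sum]
          exact Finset.sum_congr rfl fun a _ => Finset.sum_congr rfl fun b _ => by ring
        intro i
        have := (Finset.sum_eq_zero_iff_of_nonneg
          (fun j _ => sq_nonneg (∑ a, c a * W a j))).1 h1 i (Finset.mem_univ i)
        exact (pow_eq_zero_iff two_ne_zero).1 this
      have : ∀ a, c a = 0 := by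
        apply Fintype.linearIndependent_iff.1 hW
        funext i
        simpa [Finset.sum_apply] using hs i
      exact hc0 (funext fun a => this a)
    apply hdet
    have hrow : (fun a => G a) = fun a => ∑ i, (W a i) • (fun b => W b i) := by
      funext a b
      simp [hG, Finset.sum_apply]
    have hdg : G.det = Matrix.detRowAlternating (fun a => ∑ i, (W a i) • (fun b => W b i)) := by
      rw [← hrow]; rfl
    rw [hdg]
    have hms := (Matrix.detRowAlternating (R := ℝ) (n := Fin 4)).toMultilinearMap.map_sum
      (g := fun (a : Fin 4) (i : Fin m) => (W a i) • (fun b => W b i))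
    simp only [AlternatingMap.coe_multilinearMap] at hms
    rw [hms]
    refine Finset.sum_eq_zero fun f _ => ?_
    have := Matrix.detRowAlternating.toMultilinearMap.map_smul_univ
      (fun a => W a (f a)) (fun a => (fun b => W b (f a)))
    simp only [AlternatingMap.coe_multilinearMap] at this ⊢
    rw [this]
    have htr : Matrix.detRowAlternating (fun a => (fun b => W b (f a))) = 0 := by
      have heq : (Matrix.of fun a b => W b (f a)) = (Matrix.of fun a b => W a (f b)).transpose := by
        ext a b; simp [Matrix.transpose_apply]
      have h4 : (Matrix.of fun a b => W b (f a)).det = 0 := by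
        rw [heq, Matrix.det_transpose]; exact h f
      exact h4
    rw [htr]; simp
  · intro h f
    obtain ⟨g, hg, a, ha⟩ := Fintype.not_linearIndependent_iff.1 h
    rw [← Matrix.exists_vecMul_eq_zero_iff]
    refine ⟨g, fun h0 => ha (by rw [h0]; rfl), ?_⟩
    funext b
    have hb := congrFun (hg : ∑ i, g i • W i = 0) (f b)
    simp only [Finset.sum_apply, Pi.smul_apply, Pi.zero_apply, smul_eq_mul] at hb
    simp [Matrix.vecMul, dotProduct]
    exact hb

end Aux
section Main

variable {n : ℕ}

lemma exists_rep (u v w : Fin (n+2) → ℝ)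
    (hw : w ∈ Submodule.span ℝ ({u, v} : Set (Fin (n+2) → ℝ))) (hw0 : w ≠ 0) :
    ∃ s e, s ∈ Submodule.span ℝ ({u, v} : Set (Fin (n+2) → ℝ)) ∧ e ≠ 0 ∧
      ∀ i j, wedge w s i j = e * wedge u v i j := by
  obtain ⟨a, b, hab⟩ := Submodule.mem_span_pair.1 hw
  by_cases hb : b = 0
  · have ha : a ≠ 0 := by rintro rfl; apply hw0; rw [← hab, hb]; simp
    refine ⟨v, a, Submodule.subset_span (by simp), ha, fun i j => ?_⟩
    have := wedge_comb a b 0 1 u v w v hab (by simp) i j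
    rw [this]; ring
  · refine ⟨u, -b, Submodule.subset_span (by simp), neg_ne_zero.2 hb, fun i j => ?_⟩
    have := wedge_comb a b 1 0 u v w u hab (by simp) i j
    rw [this]; ring

theorem null_planes_intersect_along_null_line_iff (n : ℕ) (hn : 1 ≤ n)
    (u v u' v' : Fin (n + 2) → ℝ)
    (huv : LinearIndependent ℝ ![u, v]) (huv' : LinearIndependent ℝ ![u', v'])
    (hex : ∃ w ∈ Submodule.span ℝ {u, v}, w ≠ 0 ∧ mink w w = 0)
    (huniq : ∀ w₁ ∈ Submodule.span ℝ {u, v}, ∀ w₂ ∈ Submodule.span ℝ {u, v},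
      w₁ ≠ 0 → w₂ ≠ 0 → mink w₁ w₁ = 0 → mink w₂ w₂ = 0 → ∃ c : ℝ, w₂ = c • w₁)
    (hex' : ∃ w ∈ Submodule.span ℝ {u', v'}, w ≠ 0 ∧ mink w w = 0)
    (huniq' : ∀ w₁ ∈ Submodule.span ℝ {u', v'}, ∀ w₂ ∈ Submodule.span ℝ {u', v'},
      w₁ ≠ 0 → w₂ ≠ 0 → mink w₁ w₁ = 0 → mink w₂ w₂ = 0 → ∃ c : ℝ, w₂ = c • w₁)
    (hne : Submodule.span ℝ {u, v} ≠ Submodule.span ℝ {u', v'}) :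
    (∃ w ∈ Submodule.span ℝ {u, v} ⊓ Submodule.span ℝ {u', v'}, w ≠ 0 ∧ mink w w = 0) ↔
    ((∀ i j k l, alt4 (fun i j k l => wedge u v i j * wedge u' v' k l) i j k l = 0) ∧
      contr (wedge u v) (wedge u' v') = 0) := by
  constructor
  · rintro ⟨w, hwmem, hw0, hww⟩
    obtain ⟨hwP, hwP'⟩ := Submodule.mem_inf.1 hwmem
    obtain ⟨a, b, hab⟩ := Submodule.mem_span_pair.1 hwP
    obtain ⟨a', b', hab'⟩ := Submodule.mem_span_pair.1 hwP'
    constructor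
    · intro i j k l
      rw [alt4_wedge_eq_det]
      have hdep : ¬ LinearIndependent ℝ ![u, v, u', v'] := by
        intro hind
        have hrel : ∑ x, (![a, b, -a', -b'] x) • (![u, v, u', v'] x) = 0 := by
          rw [Fin.sum_univ_four]
          simp only [Matrix.cons_val_zero, Matrix.cons_val_one, Matrix.head_cons,
            Matrix.cons_val_two, Matrix.tail_cons, Matrix.cons_val_three]
          funext i
          have h1 := congrFun hab i
          have h2 := congrFun hab' i
          simp only [Pi.add_apply, Pi.smul_apply, smul_eq_mul] at h1 h2 ⊢
          simp only [Pi.zero_apply, Pi.neg_apply]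
          ring_nf
          nlinarith [h1, h2]
        have hz := Fintype.linearIndependent_iff.1 hind ![a, b, -a', -b'] hrel
        have ha0 := hz 0
        have hb0 := hz 1
        simp only [Matrix.cons_val_zero, Matrix.cons_val_one, Matrix.head_cons] at ha0 hb0
        apply hw0
        rw [← hab, ha0, hb0]; simp
      have hd := (minors_zero_iff ![u, v, u', v']).2 hdep ![i, j, k, l]
      rw [hd]; ring
    · obtain ⟨s, e, hsP, he, hrep⟩ := exists_rep u v w hwP hw0
      obtain ⟨s', e', hsP', he', hrep'⟩ := exists_rep u' v' w hwP' hw0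
      have h0 : contr (wedge w s) (wedge w s')
          = (e * e') * contr (wedge u v) (wedge u' v') :=
        contr_smul_eq e e' _ _ _ _ hrep hrep'
      have hws : mink w s = 0 := radical _ huniq w hwP hw0 hww s hsP
      have hsw : mink s w = 0 := by rw [mink_comm]; exact hws
      have hws' : mink w s' = 0 := radical _ huniq' w hwP' hw0 hww s' hsP'
      have h1 : contr (wedge w s) (wedge w s') = 0 := by
        rw [contr_wedge, hww, hws', hsw]; ring
      rw [h1] at h0
      exact ((mul_eq_zero.1 h0.symm).resolve_left (mul_ne_zero he he'))
  · rintro ⟨halt, hcontr⟩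
    have hdep : ¬ LinearIndependent ℝ ![u, v, u', v'] := by
      rw [← minors_zero_iff]
      intro f
      have h := halt (f 0) (f 1) (f 2) (f 3)
      rw [alt4_wedge_eq_det] at h
      have hf : ![f 0, f 1, f 2, f 3] = f := by funext b; fin_cases b <;> rfl
      rw [hf] at h
      linarith
    obtain ⟨g, hg, a0, ha0⟩ := Fintype.not_linearIndependent_iff.1 hdep
    set w : Fin (n+2) → ℝ := g 0 • u + g 1 • v with hwdef
    have hwP : w ∈ Submodule.span ℝ ({u, v} : Set (Fin (n+2) → ℝ)) :=
      Submodule.mem_span_pair.2 ⟨g 0, g 1, rfl⟩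
    have hgsum : ∀ i, g 0 * u i + g 1 * v i + g 2 * u' i + g 3 * v' i = 0 := by
      intro i
      have := congrFun hg i
      rw [Fin.sum_univ_four] at this
      simpa [Matrix.cons_val_zero, Matrix.cons_val_one] using this
    have hwneg : (-(g 2)) • u' + (-(g 3)) • v' = w := by
      funext i
      have := hgsum i
      simp only [hwdef, Pi.add_apply, Pi.smul_apply, Pi.neg_apply, smul_eq_mul]
      linarith
    have hwP' : w ∈ Submodule.span ℝ ({u', v'} : Set (Fin (n+2) → ℝ)) :=
      Submodule.mem_span_pair.2 ⟨-(g 2), -(g 3), hwneg⟩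
    have hw0 : w ≠ 0 := by
      intro h
      have h01 := LinearIndependent.pair_iff.1 huv (g 0) (g 1) (by rw [← hwdef]; exact h)
      have h23 := LinearIndependent.pair_iff.1 huv' (-(g 2)) (-(g 3)) (by rw [hwneg]; exact h)
      apply ha0
      have hg2 : g 2 = 0 := by have := h23.1; linarith
      have hg3 : g 3 = 0 := by have := h23.2; linarith
      fin_cases a0 <;> simp [h01.1, h01.2, hg2, hg3]
    by_cases hnull : mink w w = 0
    · exact ⟨w, Submodule.mem_inf.2 ⟨hwP, hwP'⟩, hw0, hnull⟩
    · obtain ⟨nv, hnvP, hnv0, hnvnull⟩ := hex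
      obtain ⟨nv', hnvP', hnv0', hnvnull'⟩ := hex'
      obtain ⟨α, β, hnab⟩ := Submodule.mem_span_pair.1 hnvP
      obtain ⟨a, b, hwab⟩ := Submodule.mem_span_pair.1 hwP
      obtain ⟨α', β', hnab'⟩ := Submodule.mem_span_pair.1 hnvP'
      obtain ⟨a', b', hwab'⟩ := Submodule.mem_span_pair.1 hwP'
      have hrep : ∀ i j, wedge nv w i j = (α * b - β * a) * wedge u v i j :=
        wedge_comb α β a b u v nv w hnab hwab
      have hrep' : ∀ i j, wedge nv' w i j = (α' * b' - β' * a') * wedge u' v' i j :=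
        wedge_comb α' β' a' b' u' v' nv' w hnab' hwab'
      have hκ : (α * b - β * a) ≠ 0 := by
        intro h
        have hzero : ∀ i j, wedge nv w i j = 0 := fun i j => by rw [hrep i j, h]; ring
        obtain ⟨c, hc⟩ := wedge_zero_dep nv w hnv0 hzero
        apply hnull
        rw [hc, mink_smul_left, mink_comm, mink_smul_left, hnvnull]; ring
      have hκ' : (α' * b' - β' * a') ≠ 0 := by
        intro h
        have hzero : ∀ i j, wedge nv' w i j = 0 := fun i j => by rw [hrep' i j, h]; ring
        obtain ⟨c, hc⟩ := wedge_zero_dep nv' w hnv0' hzero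
        apply hnull
        rw [hc, mink_smul_left, mink_comm, mink_smul_left, hnvnull']; ring
      have h0 : contr (wedge nv w) (wedge nv' w)
          = ((α * b - β * a) * (α' * b' - β' * a')) * contr (wedge u v) (wedge u' v') :=
        contr_smul_eq _ _ _ _ _ _ hrep hrep'
      rw [hcontr, mul_zero, contr_wedge] at h0
      have hnw : mink nv w = 0 := radical _ huniq nv hnvP hnv0 hnvnull w hwP
      have hwn' : mink w nv' = 0 := by
        rw [mink_comm]; exact radical _ huniq' nv' hnvP' hnv0' hnvnull' w hwP'
      rw [hnw, hwn'] at h0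
      have hnn' : mink nv nv' = 0 := by
        have h2 : mink nv nv' * mink w w = 0 := by linarith
        exact (mul_eq_zero.1 h2).resolve_right hnull
      obtain ⟨c, hc⟩ := null_parallel nv nv' hnvnull hnvnull' hnn' hnv0
      have hc0 : c ≠ 0 := by
        intro h; apply hnv0'; rw [hc, h]; simp
      have hnvP2 : nv ∈ Submodule.span ℝ ({u', v'} : Set (Fin (n+2) → ℝ)) := by
        have : nv = c⁻¹ • nv' := by rw [hc, smul_smul, inv_mul_cancel₀ hc0, one_smul]
        rw [this]
        exact Submodule.smul_mem _ _ hnvP'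
      exact ⟨nv, Submodule.mem_inf.2 ⟨hnvP, hnvP2⟩, hnv0, hnvnull⟩

end Main
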